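/- arXiv:1810.03589 — 2 statements merged into one kernel-verified Lean document; each statement's English description precedes it below -/
import Mathlib

section
/- With J₀, J compatible complex structures on (ℝ^{2n}, Ω) as above, define A = (½(Id + (−J₀J)))^{-1} and Π = A·P₀^{(1,0)}, where P₀^{(1,0)} = ½(Id − iJ₀) is the projection of ℂ^{2n} onto the +i-eigenspace V₀^{(1,0)} of J₀. Then Π is the projection operator of ℂ^{2n} onto V_J^{(1,0)} (the +i-eigenspace of J) with kernel V₀^{(0,1)} (the −i-eigenspace of J₀); in particular ℂ^{2n} = V_J^{(1,0)} ⊕ V₀^{(0,1)}. -/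
open Matrix MeasureTheory

noncomputable section

/-- Standard complex structure on ℝ^{2n}: J₀ e_{2k} = e_{2k+1}, J₀ e_{2k+1} = -e_{2k}. -/
def J0 (n : ℕ) : Matrix (Fin (2*n)) (Fin (2*n)) ℝ :=
  Matrix.of fun i j =>
    if (i : ℕ) = (j : ℕ) + 1 ∧ (j : ℕ) % 2 = 0 then 1
    else if (j : ℕ) = (i : ℕ) + 1 ∧ (i : ℕ) % 2 = 0 then -1 else 0

/-- Standard symplectic form Ω(u,v) = ⟨J₀ u, v⟩. -/
def Omega (n : ℕ) (u v : Fin (2*n) → ℝ) : ℝ := (J0 n *ᵥ u) ⬝ᵥ v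

/-- A complex structure J compatible with Ω: J² = -Id, Ω is J-invariant,
and ⟨·,·⟩_J := Ω(·, J·) is positive definite. -/
def Compatible (n : ℕ) (J : Matrix (Fin (2*n)) (Fin (2*n)) ℝ) : Prop :=
  J * J = -1 ∧ (∀ u v, Omega n (J *ᵥ u) (J *ᵥ v) = Omega n u v) ∧
    ∀ v : Fin (2*n) → ℝ, v ≠ 0 → 0 < Omega n v (J *ᵥ v)

/-- Complexification of a real matrix. -/
def mc {m : ℕ} (M : Matrix (Fin m) (Fin m) ℝ) : Matrix (Fin m) (Fin m) ℂ :=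
  M.map (fun x => (x : ℂ))

/-- Complexification of a real vector. -/
def vc {m : ℕ} (v : Fin m → ℝ) : Fin m → ℂ := fun i => (v i : ℂ)

/-- Projection P^{(1,0)} = ½(Id - iK) onto the +i eigenspace of K. -/
def P10 {n : ℕ} (K : Matrix (Fin (2*n)) (Fin (2*n)) ℝ) : Matrix (Fin (2*n)) (Fin (2*n)) ℂ :=
  (1/2 : ℂ) • (1 - Complex.I • mc K)

/-- Projection P^{(0,1)} = ½(Id + iK) onto the -i eigenspace of K. -/
def P01 {n : ℕ} (K : Matrix (Fin (2*n)) (Fin (2*n)) ℝ) : Matrix (Fin (2*n)) (Fin (2*n)) ℂ :=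
  (1/2 : ℂ) • (1 + Complex.I • mc K)

/-- `Amat n K J = (½(Id + (-K)·J))⁻¹`; so `Amat n (J0 n) J` is A_t^0 and
`Amat n J (J0 n)` is A_0^t. -/
def Amat (n : ℕ) (K J : Matrix (Fin (2*n)) (Fin (2*n)) ℝ) : Matrix (Fin (2*n)) (Fin (2*n)) ℝ :=
  ((1/2 : ℝ) • (1 + (-K) * J))⁻¹

/-- Π_t^0 = A_t^0 · P₀^{(1,0)}, the projection onto V_t^{(1,0)} with kernel V₀^{(0,1)}. -/
def PiT0 (n : ℕ) (J : Matrix (Fin (2*n)) (Fin (2*n)) ℝ) : Matrix (Fin (2*n)) (Fin (2*n)) ℂ :=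
  mc (Amat n (J0 n) J) * P10 (J0 n)

/-- Π_0^t = A_0^t · P_t^{(1,0)}, the projection onto V₀^{(1,0)} with kernel V_t^{(0,1)}. -/
def Pi0T (n : ℕ) (J : Matrix (Fin (2*n)) (Fin (2*n)) ℝ) : Matrix (Fin (2*n)) (Fin (2*n)) ℂ :=
  mc (Amat n J (J0 n)) * P10 J

/-- Model Bergman kernel 𝒫_J(Z,Z') = exp(-(π/2)⟨(-J₀J)(Z-Z'),Z-Z'⟩ - πiΩ(Z,Z')). -/
def Pker (n : ℕ) (J : Matrix (Fin (2*n)) (Fin (2*n)) ℝ) (Z Z' : Fin (2*n) → ℝ) : ℂ :=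
  Complex.exp (-(Real.pi : ℂ)/2 * Complex.ofReal ((((-(J0 n)) * J) *ᵥ (Z - Z')) ⬝ᵥ (Z - Z'))
    - (Real.pi : ℂ) * Complex.I * Complex.ofReal (Omega n Z Z'))

/-- Closed formula for the composed kernel (𝒫_t𝒫_0)(Z,Z'). -/
def PtP0form (n : ℕ) (J : Matrix (Fin (2*n)) (Fin (2*n)) ℝ) (Z Z' : Fin (2*n) → ℝ) : ℂ :=
  Complex.ofReal (Real.sqrt (Amat n (J0 n) J).det) *
    Complex.exp (-(Real.pi : ℂ) *
      ((Pi0T n J *ᵥ (vc Z - vc Z')) ⬝ᵥ (vc Z - vc Z')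
        + Complex.I * Complex.ofReal (Omega n Z Z')))

section AuxLemmas

lemma J0_antisymm (n : ℕ) : (J0 n)ᵀ = -(J0 n) := by
  ext i j
  simp only [Matrix.transpose_apply, Matrix.neg_apply, J0, Matrix.of_apply]
  split_ifs <;> (try norm_num) <;> omega

lemma J0_sq (n : ℕ) : J0 n * J0 n = -1 := by
  ext i j
  rw [Matrix.mul_apply, Matrix.neg_apply, Matrix.one_apply]
  rcases Nat.mod_two_eq_zero_or_one (i : ℕ) with hi | hi
  · have h1 : (i:ℕ) + 1 < 2*n := by have := i.isLt; omega
    rw [Finset.sum_eq_single (⟨(i:ℕ)+1, h1⟩ : Fin (2*n))]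
    · simp only [J0, Matrix.of_apply, Fin.ext_iff, true_and, and_true]
      split_ifs <;> (try norm_num) <;> omega
    · intro k _ hk
      have hkv : (k:ℕ) ≠ (i:ℕ)+1 := fun h => hk (Fin.ext h)
      simp only [J0, Matrix.of_apply]
      split_ifs <;> (try norm_num) <;> omega
    · intro h; exact absurd (Finset.mem_univ _) h
  · have h1 : (i:ℕ) - 1 < 2*n := by have := i.isLt; omega
    rw [Finset.sum_eq_single (⟨(i:ℕ)-1, h1⟩ : Fin (2*n))]
    · simp only [J0, Matrix.of_apply, Fin.ext_iff, true_and, and_true]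
      split_ifs <;> (try norm_num) <;> omega
    · intro k _ hk
      have hkv : (k:ℕ) ≠ (i:ℕ)-1 := fun h => hk (Fin.ext h)
      simp only [J0, Matrix.of_apply]
      split_ifs <;> (try norm_num) <;> omega
    · intro h; exact absurd (Finset.mem_univ _) h

lemma mc_eq {m : ℕ} (M : Matrix (Fin m) (Fin m) ℝ) : mc M = M.map Complex.ofRealHom := rfl
lemma mc_mul {m : ℕ} (M N : Matrix (Fin m) (Fin m) ℝ) : mc (M * N) = mc M * mc N := by
  simp only [mc_eq]; exact Matrix.map_mul
lemma mc_one {m : ℕ} : mc (1 : Matrix (Fin m) (Fin m) ℝ) = 1 := by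
  simp only [mc_eq]; exact Matrix.map_one _ (map_zero _) (map_one _)
lemma mc_add {m : ℕ} (M N : Matrix (Fin m) (Fin m) ℝ) : mc (M + N) = mc M + mc N := by
  ext i j; simp [mc]
lemma mc_neg {m : ℕ} (M : Matrix (Fin m) (Fin m) ℝ) : mc (-M) = -(mc M) := by
  ext i j; simp [mc]
lemma mc_smul {m : ℕ} (r : ℝ) (M : Matrix (Fin m) (Fin m) ℝ) :
    mc (r • M) = (r : ℂ) • mc M := by
  ext i j; simp [mc]

lemma expandL {m : ℕ} (X Y : Matrix (Fin m) (Fin m) ℂ) (hX : X * X = -1) :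
    ((1/2:ℂ) • (1 - Complex.I • X)) * ((1/2:ℂ) • (1 + (-X) * Y))
      = (1/4:ℂ) • ((1 - X * Y) - Complex.I • X - Complex.I • Y) := by
  have h : X * (X * Y) = -Y := by rw [← Matrix.mul_assoc, hX]; simp
  rw [smul_mul_smul_comm]
  simp only [Matrix.sub_mul, Matrix.mul_add, Matrix.one_mul, Matrix.mul_one,
    Matrix.neg_mul, Matrix.mul_neg, smul_mul_assoc, Matrix.mul_smul, mul_smul_comm, h]
  norm_num
  module

lemma expandR {m : ℕ} (X Y : Matrix (Fin m) (Fin m) ℂ) (hY : Y * Y = -1) :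
    ((1/2:ℂ) • (1 + (-X) * Y)) * ((1/2:ℂ) • (1 - Complex.I • Y))
      = (1/4:ℂ) • ((1 - X * Y) - Complex.I • X - Complex.I • Y) := by
  have h : X * (Y * Y) = -X := by rw [hY]; simp
  rw [smul_mul_smul_comm]
  simp only [Matrix.sub_mul, Matrix.mul_sub, Matrix.add_mul, Matrix.mul_add, Matrix.one_mul,
    Matrix.mul_one, Matrix.neg_mul, Matrix.mul_neg, smul_mul_assoc, mul_smul_comm,
    Matrix.mul_assoc, h, neg_neg]
  module

lemma expandPP {m : ℕ} (X Y : Matrix (Fin m) (Fin m) ℂ) :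
    ((1/2:ℂ) • (1 - Complex.I • X)) * ((1/2:ℂ) • (1 - Complex.I • Y))
      = (1/4:ℂ) • ((1 - X * Y) - Complex.I • X - Complex.I • Y) := by
  rw [smul_mul_smul_comm]
  simp only [Matrix.sub_mul, Matrix.mul_sub, Matrix.one_mul, Matrix.mul_one,
    smul_mul_assoc, mul_smul_comm, smul_smul]
  match_scalars <;> norm_num [Complex.I_sq]

end AuxLemmas


/-- Π = A·P₀^{(1,0)} is the projection of ℂ^{2n} onto V_J^{(1,0)}
with kernel V₀^{(0,1)}; in particular ℂ^{2n} = V_J^{(1,0)} ⊕ V₀^{(0,1)}. -/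
theorem stmt1 (n : ℕ) (J : Matrix (Fin (2*n)) (Fin (2*n)) ℝ) (hJ : Compatible n J) :
    (∀ v : Fin (2*n) → ℂ, mc J *ᵥ (PiT0 n J *ᵥ v) = Complex.I • (PiT0 n J *ᵥ v)) ∧
    (∀ v : Fin (2*n) → ℂ, mc J *ᵥ v = Complex.I • v → PiT0 n J *ᵥ v = v) ∧
    (∀ v : Fin (2*n) → ℂ, mc (J0 n) *ᵥ v = (-Complex.I) • v → PiT0 n J *ᵥ v = 0) ∧
    (∀ v : Fin (2*n) → ℂ,
      mc (J0 n) *ᵥ (v - PiT0 n J *ᵥ v) = (-Complex.I) • (v - PiT0 n J *ᵥ v)) ∧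
    (∀ v : Fin (2*n) → ℂ,
      mc J *ᵥ v = Complex.I • v → mc (J0 n) *ᵥ v = (-Complex.I) • v → v = 0) := by
  obtain ⟨hJJ, _hcomp, hpos⟩ := hJ
  set Br : Matrix (Fin (2*n)) (Fin (2*n)) ℝ := (1/2 : ℝ) • (1 + (-(J0 n)) * J) with hBr
  -- invertibility of Br
  have hBdet : Br.det ≠ 0 := by
    intro hdet
    obtain ⟨v, hv0, hv⟩ := Matrix.exists_mulVec_eq_zero_iff.mpr hdet
    have hdot : (Br *ᵥ v) ⬝ᵥ v = 0 := by rw [hv, zero_dotProduct]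
    have hkey : (((-(J0 n)) * J) *ᵥ v) ⬝ᵥ v = Omega n v (J *ᵥ v) := by
      have e1 : ((-(J0 n)) * J) *ᵥ v = -(J0 n *ᵥ (J *ᵥ v)) := by
        rw [Matrix.neg_mul, Matrix.neg_mulVec, Matrix.mulVec_mulVec]
      rw [e1, neg_dotProduct]
      have e2 : (J0 n *ᵥ (J *ᵥ v)) ⬝ᵥ v = -((J0 n *ᵥ v) ⬝ᵥ (J *ᵥ v)) := by
        rw [dotProduct_comm, Matrix.dotProduct_mulVec, ← Matrix.mulVec_transpose,
          J0_antisymm, Matrix.neg_mulVec, neg_dotProduct]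
      rw [e2, neg_neg, Omega]
    have hexp : (Br *ᵥ v) ⬝ᵥ v = (1/2 : ℝ) * (v ⬝ᵥ v + Omega n v (J *ᵥ v)) := by
      rw [hBr, Matrix.smul_mulVec, smul_dotProduct, Matrix.add_mulVec,
        Matrix.one_mulVec, add_dotProduct, hkey, smul_eq_mul]
    have hvv : 0 ≤ v ⬝ᵥ v := Finset.sum_nonneg fun i _ => mul_self_nonneg _
    have hO : 0 < Omega n v (J *ᵥ v) := hpos v hv0
    rw [hexp] at hdot
    linarith
  have hU : IsUnit Br.det := isUnit_iff_ne_zero.mpr hBdet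
  have hinv1 : Br⁻¹ * Br = 1 := Matrix.nonsing_inv_mul _ hU
  have hinv2 : Br * Br⁻¹ = 1 := Matrix.mul_nonsing_inv _ hU
  set X := mc (J0 n) with hXdef
  set Y := mc J with hYdef
  have hX : X * X = -1 := by rw [hXdef, ← mc_mul, J0_sq, ← mc_one, ← mc_neg]
  have hY : Y * Y = -1 := by rw [hYdef, ← mc_mul, hJJ, ← mc_one, ← mc_neg]
  set Ac := mc (Amat n (J0 n) J) with hAcdef
  set Bc := mc Br with hBcdef
  have hAmat : Amat n (J0 n) J = Br⁻¹ := rfl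
  have hAB : Ac * Bc = 1 := by
    rw [hAcdef, hBcdef, hAmat, ← mc_mul, hinv1, mc_one]
  have hBA : Bc * Ac = 1 := by
    rw [hAcdef, hBcdef, hAmat, ← mc_mul, hinv2, mc_one]
  have hBc : Bc = (1/2:ℂ) • (1 + (-X) * Y) := by
    rw [hBcdef, hBr, mc_smul, mc_add, mc_one, mc_mul, mc_neg]
    norm_num
    rfl
  set P0 : Matrix (Fin (2*n)) (Fin (2*n)) ℂ := (1/2:ℂ) • (1 - Complex.I • X) with hP0
  set Pt : Matrix (Fin (2*n)) (Fin (2*n)) ℂ := (1/2:ℂ) • (1 - Complex.I • Y) with hPt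
  have hP10J0 : P10 (J0 n) = P0 := rfl
  have hPiDef : PiT0 n J = Ac * P0 := rfl
  -- key commutation identities
  have hComm : P0 * Bc = Bc * Pt := by
    rw [hP0, hPt, hBc, expandL X Y hX, expandR X Y hY]
  have hPP : P0 * Pt = Bc * Pt := by
    rw [hP0, hPt, hBc, expandPP X Y, expandR X Y hY]
  have e1 : Ac * (P0 * Bc) = Pt := by
    rw [hComm, ← Matrix.mul_assoc, hAB, Matrix.one_mul]
  have hPiAlt : PiT0 n J = Pt * Ac := by
    calc PiT0 n J = Ac * P0 := hPiDef
      _ = Ac * P0 * 1 := (Matrix.mul_one _).symm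
      _ = Ac * P0 * (Bc * Ac) := by rw [hBA]
      _ = Ac * (P0 * Bc) * Ac := by simp only [Matrix.mul_assoc]
      _ = Pt * Ac := by rw [e1]
  have hJPi : Y * PiT0 n J = Complex.I • PiT0 n J := by
    have hYPt : Y * Pt = Complex.I • Pt := by
      rw [hPt]
      simp only [mul_smul_comm, Matrix.mul_sub, Matrix.mul_one, mul_smul_comm,
        Matrix.mul_smul, smul_smul, hY, smul_sub]
      match_scalars <;> (try ring_nf) <;> (try simp [Complex.I_sq]) <;> (try norm_num)
    rw [hPiAlt, ← Matrix.mul_assoc, hYPt, smul_mul_assoc]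
  have hP0Pi : P0 * PiT0 n J = P0 := by
    have hP0eq : Bc * Pt * Ac = P0 := by
      calc Bc * Pt * Ac = Bc * (Ac * (P0 * Bc)) * Ac := by rw [e1]
        _ = (Bc * Ac) * (P0 * (Bc * Ac)) := by simp only [Matrix.mul_assoc]
        _ = P0 := by rw [hBA, Matrix.one_mul, Matrix.mul_one]
    rw [hPiAlt, ← Matrix.mul_assoc, hPP, hP0eq]
  -- vector-level statements
  have stmt2 : ∀ v : Fin (2*n) → ℂ, Y *ᵥ v = Complex.I • v → PiT0 n J *ᵥ v = v := by
    intro v hv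
    have hP0v : P0 *ᵥ v = Bc *ᵥ v := by
      rw [hP0, hBc, Matrix.smul_mulVec, Matrix.smul_mulVec,
        Matrix.sub_mulVec, Matrix.add_mulVec, Matrix.one_mulVec,
        Matrix.smul_mulVec, Matrix.neg_mul, Matrix.neg_mulVec,
        ← Matrix.mulVec_mulVec, hv, Matrix.mulVec_smul, sub_eq_add_neg]
    rw [hPiDef, ← Matrix.mulVec_mulVec, hP0v, Matrix.mulVec_mulVec, hAB, Matrix.one_mulVec]
  have stmt3 : ∀ v : Fin (2*n) → ℂ, X *ᵥ v = (-Complex.I) • v → PiT0 n J *ᵥ v = 0 := by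
    intro v hv
    have hP0v : P0 *ᵥ v = 0 := by
      rw [hP0, Matrix.smul_mulVec, Matrix.sub_mulVec, Matrix.one_mulVec,
        Matrix.smul_mulVec, hv, smul_smul]
      norm_num [Complex.I_mul_I]
    rw [hPiDef, ← Matrix.mulVec_mulVec, hP0v, Matrix.mulVec_zero]
  refine ⟨?_, stmt2, stmt3, ?_, ?_⟩
  · intro v
    rw [Matrix.mulVec_mulVec, hJPi, Matrix.smul_mulVec]
  · intro v
    set w := v - PiT0 n J *ᵥ v with hw
    have hP0w : P0 *ᵥ w = 0 := by
      rw [hw, Matrix.mulVec_sub, Matrix.mulVec_mulVec, hP0Pi, sub_self]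
    have hrw : w = Complex.I • (X *ᵥ w) := by
      have := hP0w
      rw [hP0, Matrix.smul_mulVec, Matrix.sub_mulVec, Matrix.one_mulVec,
        Matrix.smul_mulVec, smul_eq_zero] at this
      rcases this with h | h
      · norm_num at h
      · exact sub_eq_zero.mp h
    have : X *ᵥ w = (-Complex.I) • w := by
      calc X *ᵥ w = X *ᵥ (Complex.I • (X *ᵥ w)) := by rw [← hrw]
        _ = Complex.I • (X *ᵥ (X *ᵥ w)) := by rw [Matrix.mulVec_smul]
        _ = Complex.I • ((X * X) *ᵥ w) := by rw [Matrix.mulVec_mulVec]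
        _ = Complex.I • ((-1 : Matrix (Fin (2*n)) (Fin (2*n)) ℂ) *ᵥ w) := by rw [hX]
        _ = (-Complex.I) • w := by
            rw [Matrix.neg_mulVec, Matrix.one_mulVec, smul_neg, neg_smul]
    exact this
  · intro v h1 h2
    have e1 := stmt2 v h1
    have e2 := stmt3 v h2
    rw [e1] at e2
    exact e2

end
end

section
/- Let P_K^{(1,0)} = ½(Id − iK) and P_K^{(0,1)} = ½(Id + iK) for a complex structure K on ℝ^{2n} (extended to ℂ^{2n}). Let J₀, J_t be compatible complex structures as above, A_t^0 = (½(Id+(−J₀J_t)))^{-1}, A_0^t = (½(Id+(−J_tJ₀)))^{-1}, Π_t^0 = A_t^0 P₀^{(1,0)}, Π_0^t = A_0^t P_t^{(1,0)}. Then the following identities hold: Π_t^0 P_t^{(1,0)} = P_t^{(1,0)}, Π_0^t P₀^{(1,0)} = P₀^{(1,0)}, P_t^{(1,0)} Π_t^0 = Π_t^0, and P₀^{(1,0)} Π_0^t = Π_0^t. -/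
open Matrix MeasureTheory

noncomputable section

lemma mc_neg_one {m : ℕ} : mc (-1 : Matrix (Fin m) (Fin m) ℝ) = -1 := by
  ext i j; simp [mc, Matrix.one_apply, apply_ite]

lemma isUnit_det_of_ker {m : ℕ} (M : Matrix (Fin m) (Fin m) ℝ)
    (h : ∀ v, M *ᵥ v = 0 → v = 0) : IsUnit M.det := by
  rw [isUnit_iff_ne_zero]
  intro hdet
  obtain ⟨v, hv0, hv⟩ := (Matrix.exists_mulVec_eq_zero_iff).mpr hdet
  exact hv0 (h v hv)

lemma alg_key {m : ℕ} (a b : Matrix (Fin m) (Fin m) ℂ) (hb : b * b = -1) :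
    ((1/2:ℂ) • (1 - a*b)) * ((1/2:ℂ) • (1 - Complex.I • b))
      = ((1/2:ℂ) • (1 - Complex.I • a)) * ((1/2:ℂ) • (1 - Complex.I • b)) := by
  simp only [smul_mul_smul_comm, mul_sub, sub_mul, one_mul, mul_one, smul_mul_assoc,
    mul_smul_comm, smul_smul, smul_sub, mul_assoc, hb, Complex.I_mul_I,
    mul_neg_one, neg_mul, mul_neg, neg_neg, smul_neg, sub_neg_eq_add]
  match_scalars <;> first | ring1 | (ring_nf; simp [Complex.I_sq]; try ring1)

lemma alg_key2 {m : ℕ} (a b : Matrix (Fin m) (Fin m) ℂ) (ha : a * a = -1) (hb : b * b = -1) :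
    ((1/2:ℂ) • (1 - Complex.I • a)) * ((1/2:ℂ) • (1 - a*b))
      = ((1/2:ℂ) • (1 - a*b)) * ((1/2:ℂ) • (1 - Complex.I • b)) := by
  have ha' : a * (a * b) = -b := by rw [← mul_assoc, ha, neg_one_mul]
  simp only [smul_mul_smul_comm, mul_sub, sub_mul, one_mul, mul_one, smul_mul_assoc,
    mul_smul_comm, smul_smul, smul_sub, mul_assoc, ha', hb, Complex.I_mul_I,
    mul_neg_one, neg_mul, mul_neg, neg_neg, smul_neg, sub_neg_eq_add]
  match_scalars <;> first | ring1 | (ring_nf; simp [Complex.I_sq]; try ring1)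

lemma alg_idem {m : ℕ} (a : Matrix (Fin m) (Fin m) ℂ) (ha : a * a = -1) :
    ((1/2:ℂ) • (1 - Complex.I • a)) * ((1/2:ℂ) • (1 - Complex.I • a))
      = (1/2:ℂ) • (1 - Complex.I • a) := by
  simp only [smul_mul_smul_comm, mul_sub, sub_mul, one_mul, mul_one, smul_mul_assoc,
    mul_smul_comm, smul_smul, smul_sub, mul_assoc, ha, Complex.I_mul_I,
    mul_neg_one, neg_mul, mul_neg, neg_neg, smul_neg, sub_neg_eq_add]
  match_scalars <;> first | ring1 | (ring_nf; simp [Complex.I_sq]; try ring1)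


/-- the identities Π_t^0 P_t^{(1,0)} = P_t^{(1,0)},
Π_0^t P₀^{(1,0)} = P₀^{(1,0)}, P_t^{(1,0)} Π_t^0 = Π_t^0, P₀^{(1,0)} Π_0^t = Π_0^t. -/
theorem stmt2 (n : ℕ) (Jt : Matrix (Fin (2*n)) (Fin (2*n)) ℝ) (hJ : Compatible n Jt) :
    PiT0 n Jt * P10 Jt = P10 Jt ∧
    Pi0T n Jt * P10 (J0 n) = P10 (J0 n) ∧
    P10 Jt * PiT0 n Jt = PiT0 n Jt ∧
    P10 (J0 n) * Pi0T n Jt = Pi0T n Jt := by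
  obtain ⟨hJt2, -, hpos⟩ := hJ
  have hJ0 := J0_sq n
  -- nonnegativity of dot squares
  have dotnn : ∀ w : Fin (2*n) → ℝ, 0 ≤ w ⬝ᵥ w :=
    fun w => Finset.sum_nonneg fun i _ => mul_self_nonneg (w i)
  -- the real matrices M, M'
  set M : Matrix (Fin (2*n)) (Fin (2*n)) ℝ := (1/2 : ℝ) • (1 + (-(J0 n)) * Jt) with hMdef
  set M' : Matrix (Fin (2*n)) (Fin (2*n)) ℝ := (1/2 : ℝ) • (1 + (-Jt) * (J0 n)) with hM'def
  -- invertibility of M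
  have hMdet : IsUnit M.det := by
    apply isUnit_det_of_ker
    intro v hv
    by_contra hv0
    have h1 : ((J0 n) * Jt) *ᵥ v = v := by
      rw [hMdef, Matrix.smul_mulVec] at hv
      have h2 := (smul_eq_zero.mp hv).resolve_left (by norm_num)
      rw [Matrix.add_mulVec, Matrix.one_mulVec, neg_mul, Matrix.neg_mulVec] at h2
      exact (eq_of_sub_eq_zero (by rw [sub_eq_add_neg]; exact h2)).symm
    set w := Jt *ᵥ v with hw
    have hvw : (J0 n) *ᵥ w = v := by rw [hw, Matrix.mulVec_mulVec]; exact h1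
    have hOm : Omega n v (Jt *ᵥ v) = (-w) ⬝ᵥ w := by
      rw [Omega, ← hw, ← hvw, Matrix.mulVec_mulVec, hJ0, Matrix.neg_mulVec, Matrix.one_mulVec]
    have := hpos v hv0
    rw [hOm, neg_dotProduct] at this
    linarith [dotnn w]
  -- invertibility of M'
  have hM'det : IsUnit M'.det := by
    apply isUnit_det_of_ker
    intro v hv
    by_contra hv0
    have h1 : (Jt * (J0 n)) *ᵥ v = v := by
      rw [hM'def, Matrix.smul_mulVec] at hv
      have h2 := (smul_eq_zero.mp hv).resolve_left (by norm_num)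
      rw [Matrix.add_mulVec, Matrix.one_mulVec, neg_mul, Matrix.neg_mulVec] at h2
      exact (eq_of_sub_eq_zero (by rw [sub_eq_add_neg]; exact h2)).symm
    set w := (J0 n) *ᵥ v with hw
    have hvw : Jt *ᵥ w = v := by rw [hw, Matrix.mulVec_mulVec]; exact h1
    have hOm : Omega n v (Jt *ᵥ v) = w ⬝ᵥ (-w) := by
      rw [Omega, ← hw]
      congr 1
      rw [← hvw, Matrix.mulVec_mulVec, hJt2, Matrix.neg_mulVec, Matrix.one_mulVec]
    have := hpos v hv0
    rw [hOm, dotProduct_neg] at this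
    linarith [dotnn w]
  -- complexified pieces
  set a : Matrix (Fin (2*n)) (Fin (2*n)) ℂ := mc (J0 n) with hadef
  set b : Matrix (Fin (2*n)) (Fin (2*n)) ℂ := mc Jt with hbdef
  have ha : a * a = -1 := by rw [hadef, ← mc_mul, hJ0, mc_neg_one]
  have hb : b * b = -1 := by rw [hbdef, ← mc_mul, hJt2, mc_neg_one]
  have hMc : mc M = (1/2:ℂ) • (1 - a * b) := by
    rw [hMdef, mc_smul, mc_add, mc_one, mc_mul, mc_neg]
    push_cast
    rw [neg_mul, ← sub_eq_add_neg]
  have hM'c : mc M' = (1/2:ℂ) • (1 - b * a) := by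
    rw [hM'def, mc_smul, mc_add, mc_one, mc_mul, mc_neg]
    push_cast
    rw [neg_mul, ← sub_eq_add_neg]
  -- inverse facts
  have hAMinv : Amat n (J0 n) Jt = M⁻¹ := rfl
  have hA'Minv : Amat n Jt (J0 n) = M'⁻¹ := rfl
  set A : Matrix (Fin (2*n)) (Fin (2*n)) ℂ := mc (Amat n (J0 n) Jt) with hAdef
  set A' : Matrix (Fin (2*n)) (Fin (2*n)) ℂ := mc (Amat n Jt (J0 n)) with hA'def
  have hAM : A * mc M = 1 := by
    rw [hAdef, hAMinv, ← mc_mul, Matrix.nonsing_inv_mul M hMdet, mc_one]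
  have hMA : mc M * A = 1 := by
    rw [hAdef, hAMinv, ← mc_mul, Matrix.mul_nonsing_inv M hMdet, mc_one]
  have hA'M : A' * mc M' = 1 := by
    rw [hA'def, hA'Minv, ← mc_mul, Matrix.nonsing_inv_mul M' hM'det, mc_one]
  have hMA' : mc M' * A' = 1 := by
    rw [hA'def, hA'Minv, ← mc_mul, Matrix.mul_nonsing_inv M' hM'det, mc_one]
  -- projections
  have hP0 : P10 (J0 n) = (1/2:ℂ) • (1 - Complex.I • a) := rfl
  have hPt : P10 Jt = (1/2:ℂ) • (1 - Complex.I • b) := rfl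
  -- key algebraic identities
  have k1 : mc M * P10 Jt = P10 (J0 n) * P10 Jt := by
    rw [hMc, hP0, hPt]; exact alg_key a b hb
  have k2 : P10 (J0 n) * mc M = mc M * P10 Jt := by
    rw [hMc, hP0, hPt]; exact alg_key2 a b ha hb
  have k1' : mc M' * P10 (J0 n) = P10 Jt * P10 (J0 n) := by
    rw [hM'c, hP0, hPt]; exact alg_key b a ha
  have k2' : P10 Jt * mc M' = mc M' * P10 (J0 n) := by
    rw [hM'c, hP0, hPt]; exact alg_key2 b a hb ha
  have idem0 : P10 (J0 n) * P10 (J0 n) = P10 (J0 n) := by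
    rw [hP0]; exact alg_idem a ha
  have idemt : P10 Jt * P10 Jt = P10 Jt := by
    rw [hPt]; exact alg_idem b hb
  have hPiT0 : PiT0 n Jt = A * P10 (J0 n) := rfl
  have hPi0T : Pi0T n Jt = A' * P10 Jt := rfl
  -- commutation relations
  have comm1 : A * P10 (J0 n) = P10 Jt * A := by
    calc A * P10 (J0 n) = A * P10 (J0 n) * 1 := by rw [mul_one]
      _ = A * P10 (J0 n) * (mc M * A) := by rw [hMA]
      _ = A * (P10 (J0 n) * mc M) * A := by noncomm_ring
      _ = A * (mc M * P10 Jt) * A := by rw [k2]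
      _ = (A * mc M) * (P10 Jt * A) := by noncomm_ring
      _ = P10 Jt * A := by rw [hAM, one_mul]
  have comm2 : A' * P10 Jt = P10 (J0 n) * A' := by
    calc A' * P10 Jt = A' * P10 Jt * 1 := by rw [mul_one]
      _ = A' * P10 Jt * (mc M' * A') := by rw [hMA']
      _ = A' * (P10 Jt * mc M') * A' := by noncomm_ring
      _ = A' * (mc M' * P10 (J0 n)) * A' := by rw [k2']
      _ = (A' * mc M') * (P10 (J0 n) * A') := by noncomm_ring
      _ = P10 (J0 n) * A' := by rw [hA'M, one_mul]
  refine ⟨?_, ?_, ?_, ?_⟩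
  · calc PiT0 n Jt * P10 Jt = A * (P10 (J0 n) * P10 Jt) := by rw [hPiT0, mul_assoc]
      _ = A * (mc M * P10 Jt) := by rw [← k1]
      _ = (A * mc M) * P10 Jt := by rw [mul_assoc]
      _ = P10 Jt := by rw [hAM, one_mul]
  · calc Pi0T n Jt * P10 (J0 n) = A' * (P10 Jt * P10 (J0 n)) := by rw [hPi0T, mul_assoc]
      _ = A' * (mc M' * P10 (J0 n)) := by rw [← k1']
      _ = (A' * mc M') * P10 (J0 n) := by rw [mul_assoc]
      _ = P10 (J0 n) := by rw [hA'M, one_mul]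
  · calc P10 Jt * PiT0 n Jt = (P10 Jt * A) * P10 (J0 n) := by rw [hPiT0, mul_assoc]
      _ = (A * P10 (J0 n)) * P10 (J0 n) := by rw [← comm1]
      _ = A * (P10 (J0 n) * P10 (J0 n)) := by rw [mul_assoc]
      _ = A * P10 (J0 n) := by rw [idem0]
      _ = PiT0 n Jt := by rw [hPiT0]
  · calc P10 (J0 n) * Pi0T n Jt = (P10 (J0 n) * A') * P10 Jt := by rw [hPi0T, mul_assoc]
      _ = (A' * P10 Jt) * P10 Jt := by rw [← comm2]
      _ = A' * (P10 Jt * P10 Jt) := by rw [mul_assoc]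
      _ = A' * P10 Jt := by rw [idemt]
      _ = Pi0T n Jt := by rw [hPi0T]


end
end
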